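/- For any nonempty bounded subset A of a real Hilbert space H consisting of at least two points, the Chebyshev radius of A with respect to H satisfies r_H(A) ≤ (1/√2)·d(A), where d(A) is the diameter of A. -/

import Mathlib

noncomputable def chebRadius {H : Type*} [NormedAddCommGroup H] (A : Set H) : ℝ :=
  ⨅ y : H, ⨆ x : A, ‖(x : H) - y‖

open Filter Metric Finset Real RealInnerProductSpace Topology

set_option maxHeartbeats 2000000 in
theorem stmt0 {H : Type*} [NormedAddCommGroup H] [InnerProductSpace ℝ H] [CompleteSpace H] (A : Set H)
    (hA : A.Nonempty) (hb : Bornology.IsBounded A) (hnt : A.Nontrivial) :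
    chebRadius A ≤ (1 / Real.sqrt 2) * Metric.diam A := by
  have hAne : Nonempty A := hA.to_subtype
  set d : ℝ := Metric.diam A with hd
  have hd0 : 0 ≤ d := Metric.diam_nonneg
  set f : H → ℝ := fun y => ⨆ x : A, ‖(x : H) - y‖ with hf
  obtain ⟨C, hC⟩ := isBounded_iff_forall_norm_le.mp hb
  -- sup is well-defined
  have hbdd : ∀ y : H, BddAbove (Set.range fun x : A => ‖(x : H) - y‖) := by
    intro y
    refine ⟨C + ‖y‖, ?_⟩
    rintro _ ⟨x, rfl⟩
    calc ‖(x : H) - y‖ ≤ ‖(x : H)‖ + ‖y‖ := norm_sub_le _ _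
      _ ≤ C + ‖y‖ := by have := hC x x.2; linarith
  have hfx : ∀ (y : H) (x : A), ‖(x : H) - y‖ ≤ f y := fun y x => le_ciSup (hbdd y) x
  have hf0 : ∀ y : H, 0 ≤ f y := by
    intro y
    obtain ⟨x⟩ := hAne
    exact le_trans (norm_nonneg _) (hfx y x)
  set r : ℝ := chebRadius A with hrdef
  have hrinf : r = iInf f := rfl
  have hrf : ∀ y : H, r ≤ f y := by
    intro y
    exact ciInf_le ⟨0, by rintro _ ⟨z, rfl⟩; exact hf0 z⟩ y
  have hr0 : 0 ≤ r := le_ciInf hf0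
  -- Lipschitz-type bound
  have hlip : ∀ y y' : H, f y ≤ f y' + ‖y - y'‖ := by
    intro y y'
    refine ciSup_le fun x => ?_
    calc ‖(x : H) - y‖ = ‖((x : H) - y') + (y' - y)‖ := by congr 1; abel
      _ ≤ ‖(x : H) - y'‖ + ‖y' - y‖ := norm_add_le _ _
      _ ≤ f y' + ‖y - y'‖ := by
          have := hfx y' x
          rw [norm_sub_rev y' y]; linarith
  -- midpoint inequality
  have hmid : ∀ y y' : H, ‖y - y'‖ ^ 2 ≤ 2 * (f y) ^ 2 + 2 * (f y') ^ 2 - 4 * r ^ 2 := by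
    intro y y'
    set m : H := (2 : ℝ)⁻¹ • (y + y') with hm
    set B : ℝ := (f y) ^ 2 / 2 + (f y') ^ 2 / 2 - ‖y - y'‖ ^ 2 / 4 with hB
    have hpar : ∀ x : A, ‖(x : H) - m‖ ^ 2 =
        ‖(x : H) - y‖ ^ 2 / 2 + ‖(x : H) - y'‖ ^ 2 / 2 - ‖y - y'‖ ^ 2 / 4 := by
      intro x
      have h := parallelogram_law_with_norm ℝ ((x : H) - y) ((x : H) - y')
      have h2 : ((x : H) - y) + ((x : H) - y') = (2 : ℝ) • ((x : H) - m) := by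
        rw [hm]; module
      have h3 : ((x : H) - y) - ((x : H) - y') = y' - y := by abel
      rw [h2, h3] at h
      have h4 : ‖(2 : ℝ) • ((x : H) - m)‖ = 2 * ‖(x : H) - m‖ := by
        rw [norm_smul]; simp [Real.norm_ofNat]
      rw [h4, norm_sub_rev y' y] at h
      nlinarith [norm_nonneg ((x : H) - m), norm_nonneg (y - y')]
    have hxb : ∀ x : A, ‖(x : H) - m‖ ^ 2 ≤ B := by
      intro x
      rw [hpar x]
      have h1 := hfx y x
      have h2 := hfx y' x
      have n1 := norm_nonneg ((x : H) - y)
      have n2 := norm_nonneg ((x : H) - y')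
      nlinarith
    have hB0 : 0 ≤ B := by
      obtain ⟨x⟩ := hAne
      exact le_trans (sq_nonneg _) (hxb x)
    have hfm : f m ≤ Real.sqrt B := by
      refine ciSup_le fun x => ?_
      exact (Real.le_sqrt (norm_nonneg _) hB0).mpr (hxb x)
    have hrB : r ^ 2 ≤ B := by
      have h1 : r ≤ Real.sqrt B := le_trans (hrf m) hfm
      have := Real.sq_sqrt hB0
      nlinarith [Real.sqrt_nonneg B]
    rw [hB] at hrB
    nlinarith
  -- approximate centers
  have hex : ∀ n : ℕ, ∃ y : H, f y < r + 1 / (n + 1) := by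
    intro n
    apply exists_lt_of_ciInf_lt
    rw [← hrinf]
    have : (0 : ℝ) < 1 / ((n : ℝ) + 1) := by positivity
    linarith
  choose y hy using hex
  have hyr : ∀ n, r ≤ f (y n) := fun n => hrf (y n)
  -- Cauchy
  have hcauchy : CauchySeq y := by
    refine cauchySeq_of_le_tendsto_0 (fun N : ℕ => Real.sqrt (4 * (r + 1 / ((N : ℝ) + 1)) ^ 2 - 4 * r ^ 2)) ?_ ?_
    · intro n m N hn hm
      have h1 : f (y n) ≤ r + 1 / (N + 1) := by
        have := hy n
        have hle : (1 : ℝ) / (n + 1) ≤ 1 / (N + 1) := by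
          have : (N : ℝ) ≤ n := Nat.cast_le.mpr hn
          apply one_div_le_one_div_of_le (by positivity)
          linarith
        linarith
      have h2 : f (y m) ≤ r + 1 / (N + 1) := by
        have := hy m
        have hle : (1 : ℝ) / (m + 1) ≤ 1 / (N + 1) := by
          have : (N : ℝ) ≤ m := Nat.cast_le.mpr hm
          apply one_div_le_one_div_of_le (by positivity)
          linarith
        linarith
      have hsq : dist (y n) (y m) ^ 2 ≤ 4 * (r + 1 / (N + 1)) ^ 2 - 4 * r ^ 2 := by
        rw [dist_eq_norm]
        have := hmid (y n) (y m)
        nlinarith [hyr n, hyr m, hr0]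
      have := Real.sqrt_le_sqrt hsq
      rwa [Real.sqrt_sq dist_nonneg] at this
    · have hcont : Continuous fun t : ℝ => Real.sqrt (4 * (r + t) ^ 2 - 4 * r ^ 2) := by
        apply Continuous.sqrt
        fun_prop
      have := (hcont.tendsto 0).comp tendsto_one_div_add_atTop_nhds_zero_nat
      simpa [Function.comp_def] using this
  obtain ⟨c, hc⟩ := cauchySeq_tendsto_of_complete hcauchy
  -- c is an exact center
  have hfc : f c = r := by
    refine le_antisymm ?_ (hrf c)
    have hdist : Tendsto (fun n : ℕ => (r + 1 / ((n : ℝ) + 1)) + dist c (y n)) atTop (𝓝 ((r + 0) + 0)) := by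
      refine Tendsto.add (Tendsto.const_add r tendsto_one_div_add_atTop_nhds_zero_nat) ?_
      have := tendsto_const_nhds (x := c) (f := atTop (α := ℕ)) |>.dist hc
      simpa using this
    have hbound : ∀ n : ℕ, f c ≤ (r + 1 / ((n : ℝ) + 1)) + dist c (y n) := by
      intro n
      have := hlip c (y n)
      have := hy n
      rw [dist_eq_norm]
      linarith
    have := ge_of_tendsto' hdist hbound
    simpa using this
  rcases le_or_gt r 0 with hr | hr
  · calc r ≤ 0 := hr
      _ ≤ (1 / Real.sqrt 2) * d := by positivity
  -- main key estimate
  have key : ∀ ε : ℝ, 0 < ε → ε < r ^ 2 → r ^ 2 - ε - d ^ 2 / 2 ≤ ε ^ 2 := by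
    intro ε hε hεr
    set S : Set H := {x | x ∈ A ∧ r ^ 2 - ε < ‖x - c‖ ^ 2} with hS
    have hSsub : S ⊆ A := fun x hx => hx.1
    have hsqre : Real.sqrt (r ^ 2 - ε) < r := by
      rw [Real.sqrt_lt' hr]; linarith
    -- S is nonempty
    have hSne : S.Nonempty := by
      have : Real.sqrt (r ^ 2 - ε) < f c := by rw [hfc]; exact hsqre
      obtain ⟨x, hx⟩ := exists_lt_of_lt_ciSup this
      refine ⟨x, x.2, ?_⟩
      have h1 : r ^ 2 - ε = Real.sqrt (r ^ 2 - ε) ^ 2 := (Real.sq_sqrt (by linarith)).symm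
      rw [h1]
      have := Real.sqrt_nonneg (r ^ 2 - ε)
      nlinarith
    -- c is in the closed convex hull of S
    have hmem : c ∈ closure (convexHull ℝ S) := by
      by_contra hcm
      obtain ⟨f₀, u, hfu, huc⟩ := geometric_hahn_banach_closed_point
        ((convex_convexHull ℝ S).closure) isClosed_closure hcm
      obtain ⟨v, hvip⟩ : ∃ v : H, ∀ z : H, ⟪v, z⟫ = f₀ z :=
        ⟨(InnerProductSpace.toDual ℝ H).symm f₀, fun z => InnerProductSpace.toDual_symm_apply⟩
      obtain ⟨θ, hθ⟩ : ∃ θ : ℝ, θ = f₀ c - u := ⟨f₀ c - u, rfl⟩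
      have hθ0 : 0 < θ := by rw [hθ]; linarith
      have hfS : ∀ x ∈ S, f₀ x < u := fun x hx =>
        hfu x (subset_closure (subset_convexHull ℝ S hx))
      obtain ⟨t, ht⟩ : ∃ t : ℝ,
          t = min (θ / (2 * (‖v‖ ^ 2 + 1))) ((r - Real.sqrt (r ^ 2 - ε)) / (2 * (‖v‖ + 1))) :=
        ⟨_, rfl⟩
      have ht0 : 0 < t := by
        rw [ht]
        exact lt_min (div_pos hθ0 (by positivity)) (div_pos (by linarith) (by positivity))
      have ht1 : t ≤ θ / (2 * (‖v‖ ^ 2 + 1)) := ht ▸ min_le_left _ _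
      have ht2 : t ≤ (r - Real.sqrt (r ^ 2 - ε)) / (2 * (‖v‖ + 1)) := ht ▸ min_le_right _ _
      obtain ⟨c', hc'⟩ : ∃ c' : H, c' = c - t • v := ⟨_, rfl⟩
      -- bound for points of S
      have hbS : ∀ x : A, (x : H) ∈ S → ‖(x : H) - c'‖ ^ 2 ≤ r ^ 2 - t * θ := by
        intro x hxS
        have hsplit : (x : H) - c' = ((x : H) - c) + t • v := by rw [hc']; abel
        rw [hsplit, norm_add_sq_real]
        have hip : ⟪(x : H) - c, t • v⟫ = t * (f₀ x - f₀ c) := by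
          rw [real_inner_smul_right, real_inner_comm, hvip, map_sub]
        have hns : ‖t • v‖ ^ 2 = t ^ 2 * ‖v‖ ^ 2 := by
          rw [norm_smul, mul_pow, Real.norm_eq_abs, sq_abs]
        rw [hip, hns]
        have h1 : f₀ x < u := hfS x hxS
        have h2 : ‖(x : H) - c‖ ≤ r := by rw [← hfc]; exact hfx c x
        have h3 : t * (f₀ x - f₀ c) ≤ - (t * θ) := by
          rw [hθ]; nlinarith
        have h4 : t ^ 2 * ‖v‖ ^ 2 ≤ t * θ / 2 := by
          have : t * (2 * (‖v‖ ^ 2 + 1)) ≤ θ :=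
            (le_div_iff₀ (by positivity)).mp ht1
          nlinarith [sq_nonneg ‖v‖]
        nlinarith [norm_nonneg ((x : H) - c), hr0]
      -- bound for points outside S
      have hbO : ∀ x : A, (x : H) ∉ S → ‖(x : H) - c'‖ ≤ (r + Real.sqrt (r ^ 2 - ε)) / 2 := by
        intro x hxS
        have hxA : (x : H) ∈ A := x.2
        have hle : ‖(x : H) - c‖ ^ 2 ≤ r ^ 2 - ε := by
          by_contra hcon
          exact hxS ⟨hxA, by push_neg at hcon; linarith⟩
        have hle2 : ‖(x : H) - c‖ ≤ Real.sqrt (r ^ 2 - ε) :=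
          (Real.le_sqrt (norm_nonneg _) (by linarith)).mpr hle
        have htv : t * ‖v‖ ≤ (r - Real.sqrt (r ^ 2 - ε)) / 2 := by
          have h1 : t * (2 * (‖v‖ + 1)) ≤ r - Real.sqrt (r ^ 2 - ε) :=
            (le_div_iff₀ (by positivity)).mp ht2
          nlinarith [norm_nonneg v]
        calc ‖(x : H) - c'‖ = ‖((x : H) - c) + t • v‖ := by rw [hc']; congr 1; abel
          _ ≤ ‖(x : H) - c‖ + ‖t • v‖ := norm_add_le _ _
          _ ≤ Real.sqrt (r ^ 2 - ε) + t * ‖v‖ := by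
              rw [norm_smul, Real.norm_eq_abs, abs_of_pos ht0]; linarith
          _ ≤ (r + Real.sqrt (r ^ 2 - ε)) / 2 := by linarith
      set M : ℝ := max (Real.sqrt (r ^ 2 - t * θ)) ((r + Real.sqrt (r ^ 2 - ε)) / 2) with hM
      have hfM : f c' ≤ M := by
        refine ciSup_le fun x => ?_
        by_cases hxS : (x : H) ∈ S
        · refine le_trans ?_ (le_max_left _ _)
          have := hbS x hxS
          exact (Real.le_sqrt (norm_nonneg _) (by nlinarith [sq_nonneg ‖(x:H) - c'‖])).mpr this
        · exact le_trans (hbO x hxS) (le_max_right _ _)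
      have hMr : M < r := by
        apply max_lt
        · rw [Real.sqrt_lt' hr]; nlinarith
        · linarith
      have := hrf c'
      linarith
    -- extract a finite convex combination near c
    obtain ⟨z, hzS, hzd⟩ := Metric.mem_closure_iff.mp hmem ε hε
    rw [_root_.convexHull_eq] at hzS
    obtain ⟨ι, T, w, p, hw0, hw1, hpS, hcm⟩ := hzS
    have hz : z = ∑ i ∈ T, w i • p i := by
      rw [← hcm, Finset.centerMass_eq_of_sum_1 T p hw1]
    have hsum : z - c = ∑ i ∈ T, w i • (p i - c) := by
      have h1 : ∑ i ∈ T, w i • (p i - c) = (∑ i ∈ T, w i • p i) - (∑ i ∈ T, w i) • c := by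
        rw [Finset.sum_smul, ← Finset.sum_sub_distrib]
        simp [smul_sub]
      rw [h1, hw1, one_smul, hz]
    -- expand the squared norm as a double sum
    have hexp : ‖z - c‖ ^ 2 = ∑ i ∈ T, ∑ j ∈ T, w i * w j * ⟪p i - c, p j - c⟫ := by
      rw [← real_inner_self_eq_norm_sq, hsum, sum_inner]
      refine Finset.sum_congr rfl fun i hi => ?_
      rw [real_inner_smul_left, inner_sum, Finset.mul_sum]
      refine Finset.sum_congr rfl fun j hj => ?_
      rw [real_inner_smul_right]; ring
    -- lower bound each term
    have hterm : ∀ i ∈ T, ∀ j ∈ T,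
        r ^ 2 - ε - d ^ 2 / 2 ≤ ⟪p i - c, p j - c⟫ := by
      intro i hi j hj
      have hiS := hpS i hi
      have hjS := hpS j hj
      have hdij : ‖p i - p j‖ ≤ d := by
        rw [← dist_eq_norm]
        exact Metric.dist_le_diam_of_mem hb (hSsub hiS) (hSsub hjS)
      have hpol := norm_sub_sq_real (p i - c) (p j - c)
      have heq : (p i - c) - (p j - c) = p i - p j := by abel
      rw [heq] at hpol
      have h1 : r ^ 2 - ε < ‖p i - c‖ ^ 2 := hiS.2
      have h2 : r ^ 2 - ε < ‖p j - c‖ ^ 2 := hjS.2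
      nlinarith [norm_nonneg (p i - p j)]
    -- sum up
    have hsumlb : r ^ 2 - ε - d ^ 2 / 2 ≤ ‖z - c‖ ^ 2 := by
      rw [hexp]
      have h1 : ∀ i ∈ T, ∀ j ∈ T,
          w i * w j * (r ^ 2 - ε - d ^ 2 / 2) ≤ w i * w j * ⟪p i - c, p j - c⟫ := by
        intro i hi j hj
        exact mul_le_mul_of_nonneg_left (hterm i hi j hj)
          (mul_nonneg (hw0 i hi) (hw0 j hj))
      calc r ^ 2 - ε - d ^ 2 / 2
          = ∑ i ∈ T, ∑ j ∈ T, w i * w j * (r ^ 2 - ε - d ^ 2 / 2) := by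
            have hin : ∀ i ∈ T, ∑ j ∈ T, w i * w j * (r ^ 2 - ε - d ^ 2 / 2)
                = w i * (r ^ 2 - ε - d ^ 2 / 2) := by
              intro i _
              simp only [mul_assoc]
              rw [← Finset.mul_sum, ← Finset.sum_mul, hw1, one_mul]
            rw [Finset.sum_congr rfl hin, ← Finset.sum_mul, hw1, one_mul]
        _ ≤ ∑ i ∈ T, ∑ j ∈ T, w i * w j * ⟪p i - c, p j - c⟫ :=
            Finset.sum_le_sum fun i hi => Finset.sum_le_sum fun j hj => h1 i hi j hj
    have hzc : ‖z - c‖ ^ 2 < ε ^ 2 := by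
      have h1 : ‖z - c‖ < ε := by rw [← dist_eq_norm, dist_comm]; exact hzd
      nlinarith [norm_nonneg (z - c)]
    linarith
  -- conclude r ^ 2 ≤ d ^ 2 / 2
  have hrd : r ^ 2 ≤ d ^ 2 / 2 := by
    by_contra hcon
    push_neg at hcon
    set δ : ℝ := r ^ 2 - d ^ 2 / 2 with hδ
    have hδ0 : 0 < δ := by rw [hδ]; linarith
    set ε : ℝ := min (δ / 4) (min (r ^ 2 / 2) 1) with hε
    have hε0 : 0 < ε := by
      apply lt_min (by positivity) (lt_min (by positivity) one_pos)
    have hεr : ε < r ^ 2 := by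
      have : ε ≤ r ^ 2 / 2 := le_trans (min_le_right _ _) (min_le_left _ _)
      nlinarith
    have hε1 : ε ≤ 1 := le_trans (min_le_right _ _) (min_le_right _ _)
    have hεδ : ε ≤ δ / 4 := min_le_left _ _
    have := key ε hε0 hεr
    nlinarith
  -- final step
  have hrhs : 0 ≤ 1 / Real.sqrt 2 * d := by positivity
  have hsq2 : Real.sqrt 2 ^ 2 = 2 := Real.sq_sqrt (by norm_num)
  have hsq2pos : 0 < Real.sqrt 2 := Real.sqrt_pos.mpr (by norm_num)
  have hfin : r ^ 2 ≤ (1 / Real.sqrt 2 * d) ^ 2 := by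
    rw [mul_pow, div_pow, one_pow, hsq2]
    linarith
  nlinarith
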